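/- For R and z given parametrically by the hypergeometric solution formulae R = ε√15 w/(3√D), z = −8ε√15 (144s²(s−1)w_s³ − 72s(s−1)w w_s² + (5/12)w³)/(3 D^{3/2}) with D = 144s(s−1)w_s² + 5w² > 0 and w a solution of s(1−s)w'' + (1/2 − (5/6)s)w' + (35/144)w = 0, the combination (14R³ − 4R + z)²/(1 − 3R²)³ equals (20/27)·s/(s−1), independently of the choice of solution w. -/

import Mathlib

/-- for `R, z` given by the hypergeometric parametric formulae,
the combination `(14R³ − 4R + z)²/(1 − 3R²)³` equals `(20/27)·s/(s−1)`,
independently of the choice of solution `w`. -/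
theorem kudashev_modulus_combination
    (I : Set ℝ) (hI : IsOpen I) (ε : ℝ) (hε : ε = 1 ∨ ε = -1)
    (w w' w'' R z : ℝ → ℝ)
    (hw : ∀ s ∈ I, HasDerivAt w (w' s) s)
    (hw' : ∀ s ∈ I, HasDerivAt w' (w'' s) s)
    (hODE : ∀ s ∈ I,
      s * (1 - s) * w'' s + (1/2 - 5/6 * s) * w' s + 35/144 * w s = 0)
    (hD : ∀ s ∈ I, 144 * s * (s - 1) * (w' s) ^ 2 + 5 * (w s) ^ 2 > 0)
    (hRdef : ∀ s ∈ I, R s = ε * Real.sqrt 15 * w s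
      / (3 * Real.sqrt (144 * s * (s - 1) * (w' s) ^ 2 + 5 * (w s) ^ 2)))
    (hzdef : ∀ s ∈ I, z s = -8 * ε * Real.sqrt 15
      * (144 * s ^ 2 * (s - 1) * (w' s) ^ 3
          - 72 * s * (s - 1) * w s * (w' s) ^ 2 + 5/12 * (w s) ^ 3)
      / (3 * (144 * s * (s - 1) * (w' s) ^ 2 + 5 * (w s) ^ 2) ^ ((3 : ℝ) / 2))) :
    ∀ s ∈ I, s ≠ 1 → 1 - 3 * (R s) ^ 2 ≠ 0 →
      (14 * (R s) ^ 3 - 4 * R s + z s) ^ 2 / (1 - 3 * (R s) ^ 2) ^ 3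
        = 20 / 27 * (s / (s - 1)) := by
  intro s hs hs1 h3
  have hD0 := hD s hs
  have hR := hRdef s hs
  have hz := hzdef s hs
  set A := w s with hA
  set P := w' s with hP
  set D := 144 * s * (s - 1) * P ^ 2 + 5 * A ^ 2 with hDdef
  set q := Real.sqrt D with hq
  set t := Real.sqrt 15 with ht
  have hsq : q ^ 2 = D := Real.sq_sqrt hD0.le
  have ht2 : t ^ 2 = 15 := Real.sq_sqrt (by norm_num)
  have hqpos : 0 < q := Real.sqrt_pos.mpr hD0
  have hqne : q ≠ 0 := hqpos.ne'
  have hDne : D ≠ 0 := hD0.ne'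
  have hε2 : ε ^ 2 = 1 := by rcases hε with rfl | rfl <;> norm_num
  have hrpow : D ^ ((3:ℝ)/2) = q ^ 3 := by
    rw [hq, ← Real.rpow_natCast (Real.sqrt D) 3, Real.sqrt_eq_rpow,
      ← Real.rpow_mul hD0.le]
    norm_num
  have hden : 1 - 3 * (R s) ^ 2 = 144 * s * (s - 1) * P ^ 2 / D := by
    rw [hR]
    field_simp
    linear_combination (3*D - 432*s*(s-1)*P^2) * hsq + (-t^2*A^2*D) * hε2
      + (-A^2*D) * ht2 + (3*D) * hDdef
  have hkey : 14 * (R s) ^ 3 - 4 * R s + z s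
      = ε * t * (-1152 * s^2 * (s-1) * P^3) / (3 * q^3) := by
    rw [hR, hz, hrpow]
    field_simp
    linear_combination (168*ε*t^3*A^3) * hε2 + (168*ε*t*A^3) * ht2
      + (-432*ε*t*A) * hsq + (-432*ε*t*A) * hDdef
  have hnum : (14 * (R s) ^ 3 - 4 * R s + z s) ^ 2
      = 15 * (1152 * s^2 * (s-1) * P^3) ^ 2 / (9 * D^3) := by
    rw [hkey]
    field_simp
    linear_combination (9*t^2*s^4*P^6*D^3) * hε2
      + (9*s^4*P^6*D^3) * ht2
      + (-135*s^4*P^6*(q^4+q^2*D+D^2)) * hsq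
  have hnum0 : 144 * s * (s - 1) * P ^ 2 ≠ 0 := by
    intro h0
    exact h3 (by rw [hden, h0, zero_div])
  have hs0 : s ≠ 0 := fun h => hnum0 (by rw [h]; ring)
  have hP0 : P ≠ 0 := fun h => hnum0 (by rw [h]; ring)
  have hs1' : s - 1 ≠ 0 := sub_ne_zero.mpr hs1
  rw [hnum, hden]
  field_simp
  ring
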